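/- Let α > 0, β ≥ 0, B > 0, and r ≥ 1 be reals, and define Π(θ) = 1 − (α/θ)·(β + B·√(2·log(r·θ/α))) for θ > 0. Then for every θ > 0 with 2·log(r·θ/α) ≥ 2, the second derivative of Π at θ equals −(α/θ³)·(2β + 2B·ζ^{1/2} − 3B·ζ^{−1/2} − B·ζ^{−3/2}) with ζ = 2·log(r·θ/α), and this second derivative is strictly negative. -/

import Mathlib

open Real Filter

private lemma sqrt_deriv (α r : ℝ) (hα : 0 < α) (hr : 0 < r)
    (x : ℝ) (hx : 0 < x) (hl : 0 < Real.log (r * x / α)) :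
    HasDerivAt (fun t : ℝ => Real.sqrt (2 * Real.log (r * t / α)))
      (1 / (x * Real.sqrt (2 * Real.log (r * x / α)))) x := by
  have hpos : 0 < r * x / α := by positivity
  have hζ : 0 < 2 * Real.log (r * x / α) := by linarith
  have hspos : 0 < Real.sqrt (2 * Real.log (r * x / α)) := Real.sqrt_pos.2 hζ
  have h1 : HasDerivAt (fun t : ℝ => r * t / α) (r / α) x := by
    simpa using ((hasDerivAt_id x).const_mul r).div_const α
  have h2 : HasDerivAt (fun t : ℝ => Real.log (r * t / α)) ((r * x / α)⁻¹ * (r / α)) x :=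
    by have := (Real.hasDerivAt_log hpos.ne').comp x h1; exact this
  have h3 : HasDerivAt (fun t : ℝ => 2 * Real.log (r * t / α))
      (2 * ((r * x / α)⁻¹ * (r / α))) x := h2.const_mul 2
  have h4 : HasDerivAt (fun t : ℝ => Real.sqrt (2 * Real.log (r * t / α)))
      (1 / (2 * Real.sqrt (2 * Real.log (r * x / α))) * (2 * ((r * x / α)⁻¹ * (r / α)))) x :=
    (Real.hasDerivAt_sqrt hζ.ne').comp x h3
  convert h4 using 1
  field_simp

private lemma hasDeriv1 (α β B r : ℝ) (hα : 0 < α) (hr : 0 < r)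
    (x : ℝ) (hx : 0 < x) (hl : 0 < Real.log (r * x / α)) :
    HasDerivAt (fun t => 1 - α / t * (β + B * Real.sqrt (2 * Real.log (r * t / α))))
      (α / x ^ 2 * (β + B * Real.sqrt (2 * Real.log (r * x / α))
        - B / Real.sqrt (2 * Real.log (r * x / α)))) x := by
  have hζ : 0 < 2 * Real.log (r * x / α) := by linarith
  have hspos : 0 < Real.sqrt (2 * Real.log (r * x / α)) := Real.sqrt_pos.2 hζ
  have h4 := sqrt_deriv α r hα hr x hx hl
  have h5 : HasDerivAt (fun t : ℝ => β + B * Real.sqrt (2 * Real.log (r * t / α)))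
      (B * (1 / (x * Real.sqrt (2 * Real.log (r * x / α))))) x :=
    (h4.const_mul B).const_add β
  have h6 : HasDerivAt (fun t : ℝ => α / t) (-(α / x ^ 2)) x := by
    simpa [div_eq_mul_inv, sq] using (hasDerivAt_inv hx.ne').const_mul α
  have h8 := (hasDerivAt_const x (1 : ℝ)).sub (h6.mul h5)
  refine h8.congr_deriv ?_
  field_simp
  ring

private lemma hasDeriv2 (α β B r : ℝ) (hα : 0 < α) (hr : 0 < r)
    (x : ℝ) (hx : 0 < x) (hl : 0 < Real.log (r * x / α)) :
    HasDerivAt (fun t => α / t ^ 2 * (β + B * Real.sqrt (2 * Real.log (r * t / α))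
        - B / Real.sqrt (2 * Real.log (r * t / α))))
      (-(α / x ^ 3) * (2 * β + 2 * B * Real.sqrt (2 * Real.log (r * x / α))
        - 3 * B / Real.sqrt (2 * Real.log (r * x / α))
        - B / Real.sqrt (2 * Real.log (r * x / α)) ^ 3)) x := by
  have hζ : 0 < 2 * Real.log (r * x / α) := by linarith
  have hspos : 0 < Real.sqrt (2 * Real.log (r * x / α)) := Real.sqrt_pos.2 hζ
  have h4 := sqrt_deriv α r hα hr x hx hl
  have hg : HasDerivAt (fun t : ℝ => β + B * Real.sqrt (2 * Real.log (r * t / α))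
        - B / Real.sqrt (2 * Real.log (r * t / α)))
      (B * (1 / (x * Real.sqrt (2 * Real.log (r * x / α))))
        - B * (-(1 / (x * Real.sqrt (2 * Real.log (r * x / α))))
            / Real.sqrt (2 * Real.log (r * x / α)) ^ 2)) x := by
    have hinv : HasDerivAt (fun t : ℝ => (Real.sqrt (2 * Real.log (r * t / α)))⁻¹)
        (-(1 / (x * Real.sqrt (2 * Real.log (r * x / α))))
          / Real.sqrt (2 * Real.log (r * x / α)) ^ 2) x := h4.inv hspos.ne'
    have := ((h4.const_mul B).const_add β).sub (hinv.const_mul B)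
    exact this
  have hfront : HasDerivAt (fun t : ℝ => α / t ^ 2) (α * (-(2 * x) / (x ^ 2) ^ 2)) x := by
    have := ((hasDerivAt_pow 2 x).inv (pow_ne_zero 2 hx.ne')).const_mul α
    simpa [div_eq_mul_inv] using this
  have h8 := hfront.mul hg
  refine h8.congr_deriv ?_
  generalize Real.sqrt (2 * Real.log (r * x / α)) = s at hspos ⊢
  field_simp
  ring

theorem stmt_13 (α β B r : ℝ) (hα : 0 < α) (hβ : 0 ≤ β) (hB : 0 < B) (hr : 1 ≤ r)
    (Pibd : ℝ → ℝ)
    (hPibd : ∀ θ : ℝ, 0 < θ →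
      Pibd θ = 1 - α / θ * (β + B * Real.sqrt (2 * Real.log (r * θ / α))))
    (θ : ℝ) (hθ : 0 < θ) (hζ : 2 ≤ 2 * Real.log (r * θ / α)) :
    deriv (deriv Pibd) θ =
      -(α / θ ^ 3) * (2 * β + 2 * B * Real.sqrt (2 * Real.log (r * θ / α))
        - 3 * B / Real.sqrt (2 * Real.log (r * θ / α))
        - B / Real.sqrt (2 * Real.log (r * θ / α)) ^ 3) ∧
    deriv (deriv Pibd) θ < 0 := by
  have hr0 : 0 < r := lt_of_lt_of_le one_pos hr
  have hlθ : 0 < Real.log (r * θ / α) := by linarith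
  have hx0 : ∀ᶠ x in nhds θ, 0 < x := eventually_gt_nhds hθ
  have hlog : ∀ᶠ x in nhds θ, 0 < Real.log (r * x / α) := by
    have hc : ContinuousAt (fun x : ℝ => Real.log (r * x / α)) θ := by
      apply ContinuousAt.log
      · fun_prop
      · positivity
    exact hc.eventually_mem (isOpen_Ioi.mem_nhds (by simpa using hlθ)) |>.mono
      fun x hx => hx
  have hfe : Pibd =ᶠ[nhds θ] fun t =>
      1 - α / t * (β + B * Real.sqrt (2 * Real.log (r * t / α))) :=
    hx0.mono fun x hx => hPibd x hx
  have hd1 : deriv Pibd =ᶠ[nhds θ] fun x =>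
      α / x ^ 2 * (β + B * Real.sqrt (2 * Real.log (r * x / α))
        - B / Real.sqrt (2 * Real.log (r * x / α))) := by
    refine hfe.deriv.trans ?_
    filter_upwards [hx0, hlog] with x hx hl
    exact (hasDeriv1 α β B r hα hr0 x hx hl).deriv
  have hkey : deriv (deriv Pibd) θ =
      -(α / θ ^ 3) * (2 * β + 2 * B * Real.sqrt (2 * Real.log (r * θ / α))
        - 3 * B / Real.sqrt (2 * Real.log (r * θ / α))
        - B / Real.sqrt (2 * Real.log (r * θ / α)) ^ 3) := by
    rw [hd1.deriv_eq]
    exact (hasDeriv2 α β B r hα hr0 θ hθ hlθ).deriv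
  refine ⟨hkey, ?_⟩
  rw [hkey]
  set s := Real.sqrt (2 * Real.log (r * θ / α)) with hs
  have hspos : 0 < s := Real.sqrt_pos.2 (by linarith)
  have hs2 : 2 ≤ s ^ 2 := by rw [Real.sq_sqrt (by linarith)]; exact hζ
  have hP : 0 < 2 * β + 2 * B * s - 3 * B / s - B / s ^ 3 := by
    have key : 0 < (2 * β + 2 * B * s - 3 * B / s - B / s ^ 3) * s ^ 3 := by
      have h1 : (2 * β + 2 * B * s - 3 * B / s - B / s ^ 3) * s ^ 3
          = 2 * β * s ^ 3 + 2 * B * s ^ 4 - 3 * B * s ^ 2 - B := by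
        field_simp
      rw [h1]
      nlinarith [sq_nonneg (s ^ 2 - 2), pow_pos hspos 3, mul_pos hspos hspos]
    nlinarith [pow_pos hspos 3]
  have : 0 < α / θ ^ 3 * (2 * β + 2 * B * s - 3 * B / s - B / s ^ 3) :=
    mul_pos (by positivity) hP
  linarith
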